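/- Let K be a field, n a nonnegative integer, x_1, …, x_{n+1} pairwise distinct elements of K, and f, g : K → K. Then the n-th iterated divided difference of the product fg at x_1, …, x_{n+1} satisfies the Leibniz formula: Σ_{j=1}^{n+1} f(x_j)g(x_j)/∏_{l ≠ j}(x_j − x_l) = Σ_{k=0}^{n} ( Σ_{j=1}^{k+1} f(x_j)/∏_{1 ≤ l ≤ k+1, l ≠ j}(x_j − x_l) ) · ( Σ_{j=k+1}^{n+1} g(x_j)/∏_{k+1 ≤ l ≤ n+1, l ≠ j}(x_j − x_l) ). -/

import Mathlib

section DDaux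

variable {K : Type*} [Field K]

/-- Divided difference of `h` at points `x a, …, x b`. -/
private def DD (x : ℕ → K) (h : K → K) (a b : ℕ) : K :=
  ∑ j ∈ Finset.Icc a b, h (x j) / ∏ l ∈ (Finset.Icc a b).erase j, (x j - x l)

private lemma DD_def (x : ℕ → K) (h : K → K) (a b : ℕ) :
    DD x h a b = ∑ j ∈ Finset.Icc a b, h (x j) / ∏ l ∈ (Finset.Icc a b).erase j, (x j - x l) :=
  rfl

private lemma L1 (h d Q : K) (hd : d ≠ 0) (hQ : Q ≠ 0) :
    h / (d * Q) * (-d) = 0 - h / Q := by field_simp; ring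

private lemma L2 (h d P : K) (hd : d ≠ 0) (hP : P ≠ 0) :
    h / (d * P) * d = h / P - 0 := by field_simp; ring

private lemma L3 (h d1 d2 P Q : K) (hd1 : d1 ≠ 0) (hP : P ≠ 0) (hQ : Q ≠ 0)
    (key : d1 * P = d2 * Q) : h / (d1 * P) * (d1 - d2) = h / P - h / Q := by
  rw [div_sub_div _ _ hP hQ, div_mul_eq_mul_div,
    div_eq_div_iff (mul_ne_zero hd1 hP) (mul_ne_zero hP hQ)]
  linear_combination h * P * key

private lemma prod_erase_factor (s : Finset ℕ) (F : ℕ → K) (m j : ℕ) (hm : m ∈ s) (hj : j ≠ m) :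
    ∏ l ∈ s.erase j, F l = F m * ∏ l ∈ (s.erase m).erase j, F l := by
  have h : (s.erase m).erase j = (s.erase j).erase m := by
    ext t; simp only [Finset.mem_erase]; tauto
  rw [h]
  exact (Finset.mul_prod_erase _ F (Finset.mem_erase.2 ⟨Ne.symm hj, hm⟩)).symm

private lemma Icc_erase_left' (a b : ℕ) : (Finset.Icc a b).erase a = Finset.Icc (a+1) b := by
  rw [Finset.Icc_erase_left, ← Finset.Icc_add_one_left_eq_Ioc]

private lemma Icc_erase_right' (a b : ℕ) : (Finset.Icc a (b+1)).erase (b+1) = Finset.Icc a b := by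
  rw [Finset.Icc_erase_right, Finset.Ico_add_one_right_eq_Icc]

private lemma prod_diff_ne_zero (x : ℕ → K) (a b j : ℕ) (hj : j ∈ Finset.Icc a b)
    (hx : ∀ p ∈ Finset.Icc a b, ∀ l ∈ Finset.Icc a b, p ≠ l → x p ≠ x l)
    (t : Finset ℕ) (ht : t ⊆ (Finset.Icc a b).erase j) :
    ∏ l ∈ t, (x j - x l) ≠ 0 := by
  rw [Finset.prod_ne_zero_iff]
  intro l hl
  have := ht hl
  rw [Finset.mem_erase] at this
  exact sub_ne_zero.2 (hx j hj l this.2 (Ne.symm this.1))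

private lemma DD_rec (x : ℕ → K) (h : K → K) (a b : ℕ) (hab : a ≤ b)
    (hx : ∀ p ∈ Finset.Icc a (b+1), ∀ l ∈ Finset.Icc a (b+1), p ≠ l → x p ≠ x l) :
    DD x h a (b+1) * (x (b+1) - x a) = DD x h (a+1) (b+1) - DD x h a b := by
  have ha : a ∈ Finset.Icc a (b+1) := by simp; omega
  have hb1 : b + 1 ∈ Finset.Icc a (b+1) := by simp; omega
  have hne : a ≠ b + 1 := by omega
  have e1 : DD x h (a+1) (b+1)
      = ∑ j ∈ Finset.Icc a (b+1), (if j = a then 0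
          else h (x j) / ∏ l ∈ (Finset.Icc (a+1) (b+1)).erase j, (x j - x l)) := by
    rw [← Finset.sum_erase (Finset.Icc a (b+1)) (a := a) (f := fun j => if j = a then 0
        else h (x j) / ∏ l ∈ (Finset.Icc (a+1) (b+1)).erase j, (x j - x l)) (if_pos rfl),
      Icc_erase_left']
    apply Finset.sum_congr rfl
    intro j hj
    have hja : j ≠ a := by simp only [Finset.mem_Icc] at hj; omega
    exact (if_neg hja).symm
  have e2 : DD x h a b
      = ∑ j ∈ Finset.Icc a (b+1), (if j = b+1 then 0
          else h (x j) / ∏ l ∈ (Finset.Icc a b).erase j, (x j - x l)) := by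
    rw [← Finset.sum_erase (Finset.Icc a (b+1)) (a := b+1) (f := fun j => if j = b+1 then 0
        else h (x j) / ∏ l ∈ (Finset.Icc a b).erase j, (x j - x l)) (if_pos rfl),
      Icc_erase_right']
    apply Finset.sum_congr rfl
    intro j hj
    have hjb : j ≠ b + 1 := by simp only [Finset.mem_Icc] at hj; omega
    exact (if_neg hjb).symm
  rw [e1, e2, DD_def, Finset.sum_mul, ← Finset.sum_sub_distrib]
  apply Finset.sum_congr rfl
  intro j hj
  have hP : ∏ l ∈ (Finset.Icc (a+1) (b+1)).erase j, (x j - x l) ≠ 0 := by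
    apply prod_diff_ne_zero x a (b+1) j hj hx
    intro l hl
    simp only [Finset.mem_erase, Finset.mem_Icc] at hl ⊢
    omega
  have hQ : ∏ l ∈ (Finset.Icc a b).erase j, (x j - x l) ≠ 0 := by
    apply prod_diff_ne_zero x a (b+1) j hj hx
    intro l hl
    simp only [Finset.mem_erase, Finset.mem_Icc] at hl ⊢
    omega
  by_cases hja : j = a
  · have hfac : ∏ l ∈ (Finset.Icc a (b+1)).erase j, (x j - x l)
        = (x j - x (b+1)) * ∏ l ∈ (Finset.Icc a b).erase j, (x j - x l) := by
      rw [prod_erase_factor _ _ (b+1) j hb1 (hja ▸ hne), Icc_erase_right']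
    have hd : x j - x (b+1) ≠ 0 := sub_ne_zero.2 (hx _ hj _ hb1 (hja ▸ hne))
    rw [if_pos hja, if_neg (hja ▸ hne), hfac,
      show x (b+1) - x a = -(x j - x (b+1)) by rw [hja]; ring]
    exact L1 _ _ _ hd hQ
  · by_cases hjb : j = b + 1
    · have hfac : ∏ l ∈ (Finset.Icc a (b+1)).erase j, (x j - x l)
          = (x j - x a) * ∏ l ∈ (Finset.Icc (a+1) (b+1)).erase j, (x j - x l) := by
        rw [prod_erase_factor _ _ a j ha hja, Icc_erase_left']
      have hd : x j - x a ≠ 0 := sub_ne_zero.2 (hx _ hj _ ha hja)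
      rw [if_neg hja, if_pos hjb, hfac, show x (b+1) - x a = x j - x a by rw [hjb]]
      exact L2 _ _ _ hd hP
    · have hfac1 : ∏ l ∈ (Finset.Icc a (b+1)).erase j, (x j - x l)
          = (x j - x a) * ∏ l ∈ (Finset.Icc (a+1) (b+1)).erase j, (x j - x l) := by
        rw [prod_erase_factor _ _ a j ha hja, Icc_erase_left']
      have hfac2 : ∏ l ∈ (Finset.Icc a (b+1)).erase j, (x j - x l)
          = (x j - x (b+1)) * ∏ l ∈ (Finset.Icc a b).erase j, (x j - x l) := by
        rw [prod_erase_factor _ _ (b+1) j hb1 hjb, Icc_erase_right']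
      have hd1 : x j - x a ≠ 0 := sub_ne_zero.2 (hx _ hj _ ha hja)
      rw [if_neg hja, if_neg hjb, hfac1,
        show x (b+1) - x a = (x j - x a) - (x j - x (b+1)) by ring]
      exact L3 _ _ _ _ _ hd1 hP hQ (hfac1 ▸ hfac2)
end DDaux

section Leib
variable {K : Type*} [Field K]

private lemma sum_shift (F : ℕ → K) (a c : ℕ) :
    ∑ k ∈ Finset.Icc (a+1) (c+1), F k = ∑ k ∈ Finset.Icc a c, F (k+1) := by
  rw [show Finset.Icc (a+1) (c+1) = (Finset.Icc a c).image (· + 1) by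
    rw [Finset.image_add_right_Icc]]
  rw [Finset.sum_image (by intro p _ q _ h; simp only at h; omega)]

private lemma DD_leibniz (x : ℕ → K) (f g : K → K) :
    ∀ d a, (∀ p ∈ Finset.Icc a (a+d), ∀ l ∈ Finset.Icc a (a+d), p ≠ l → x p ≠ x l) →
    DD x (fun y => f y * g y) a (a+d)
      = ∑ k ∈ Finset.Icc a (a+d), DD x f a k * DD x g k (a+d) := by
  intro d
  induction d with
  | zero => intro a _; simp [DD_def]
  | succ d ih =>
    intro a hx
    rw [show a + (d+1) = a+d+1 by omega] at hx ⊢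
    have hsub : ∀ a' b', a ≤ a' → b' ≤ a+d+1 →
        ∀ p ∈ Finset.Icc a' b', ∀ l ∈ Finset.Icc a' b', p ≠ l → x p ≠ x l := by
      intro a' b' h1 h2 p hp l hl hpl
      apply hx p ?_ l ?_ hpl <;> simp only [Finset.mem_Icc] at * <;> omega
    have hxba : x (a+d+1) - x a ≠ 0 :=
      sub_ne_zero.2 (hx _ (by simp only [Finset.mem_Icc]; omega) _
        (by simp only [Finset.mem_Icc]; omega) (by omega))
    apply mul_right_cancel₀ hxba
    rw [DD_rec x _ a (a+d) (by omega) hx]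
    have ih1 : DD x (fun y => f y * g y) (a+1) (a+d+1)
        = ∑ k ∈ Finset.Icc (a+1) (a+d+1), DD x f (a+1) k * DD x g k (a+d+1) := by
      have := ih (a+1) (by
        rw [show a+1+d = a+d+1 by omega]
        exact hsub (a+1) (a+d+1) (by omega) (by omega))
      rw [show a+1+d = a+d+1 by omega] at this
      exact this
    have ih2 := ih a (hsub a (a+d) le_rfl (by omega))
    rw [ih1, ih2,
      sum_shift (fun k => DD x f (a+1) k * DD x g k (a+d+1)) a (a+d),
      ← Finset.sum_sub_distrib]
    have step1 : ∑ k ∈ Finset.Icc a (a+d),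
        (DD x f (a+1) (k+1) * DD x g (k+1) (a+d+1) - DD x f a k * DD x g k (a+d))
        = ∑ k ∈ Finset.Icc a (a+d),
          ((x (k+1) - x a) * (DD x f a (k+1) * DD x g (k+1) (a+d+1))
            + (x (a+d+1) - x k) * (DD x f a k * DD x g k (a+d+1))) := by
      apply Finset.sum_congr rfl
      intro k hk
      simp only [Finset.mem_Icc] at hk
      have r1 : DD x f a (k+1) * (x (k+1) - x a) = DD x f (a+1) (k+1) - DD x f a k :=
        DD_rec x f a k hk.1 (hsub a (k+1) le_rfl (by omega))
      have r2 : DD x g k (a+d+1) * (x (a+d+1) - x k)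
          = DD x g (k+1) (a+d+1) - DD x g k (a+d) :=
        DD_rec x g k (a+d) hk.2 (hsub k (a+d+1) hk.1 le_rfl)
      linear_combination (-DD x g (k+1) (a+d+1)) * r1 - DD x f a k * r2
    rw [step1, Finset.sum_add_distrib]
    have step2 : ∑ k ∈ Finset.Icc a (a+d),
        (x (k+1) - x a) * (DD x f a (k+1) * DD x g (k+1) (a+d+1))
        = ∑ k ∈ Finset.Icc a (a+d+1),
          (x k - x a) * (DD x f a k * DD x g k (a+d+1)) := by
      rw [← sum_shift (fun k => (x k - x a) * (DD x f a k * DD x g k (a+d+1))) a (a+d),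
        ← Icc_erase_left',
        Finset.sum_erase _ (by simp)]
    have step3 : ∑ k ∈ Finset.Icc a (a+d),
        (x (a+d+1) - x k) * (DD x f a k * DD x g k (a+d+1))
        = ∑ k ∈ Finset.Icc a (a+d+1),
          (x (a+d+1) - x k) * (DD x f a k * DD x g k (a+d+1)) := by
      rw [show Finset.Icc a (a+d) = (Finset.Icc a (a+d+1)).erase (a+d+1) from
        (Icc_erase_right' a (a+d)).symm,
        Finset.sum_erase _ (by simp)]
    rw [step2, step3, ← Finset.sum_add_distrib, Finset.sum_mul]
    apply Finset.sum_congr rfl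
    intro k _
    ring

end Leib


/-- **Leibniz formula for iterated divided differences.**
For a field `K`, pairwise distinct points `x 1, …, x (n+1)` in `K`, and functions
`f, g : K → K`, the `n`-th iterated divided difference of the product `f * g` at
`x 1, …, x (n+1)` equals
`∑_{k=0}^{n} (∂-difference of f at x 1, …, x (k+1)) * (∂-difference of g at x (k+1), …, x (n+1))`. -/
theorem divided_difference_leibniz {K : Type*} [Field K] (n : ℕ) (x : ℕ → K) (f g : K → K)
    (hx : ∀ j ∈ Finset.Icc 1 (n + 1), ∀ l ∈ Finset.Icc 1 (n + 1), j ≠ l → x j ≠ x l) :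
    ∑ j ∈ Finset.Icc 1 (n + 1),
        f (x j) * g (x j) / ∏ l ∈ (Finset.Icc 1 (n + 1)).erase j, (x j - x l)
      = ∑ k ∈ Finset.range (n + 1),
          (∑ j ∈ Finset.Icc 1 (k + 1),
              f (x j) / ∏ l ∈ (Finset.Icc 1 (k + 1)).erase j, (x j - x l)) *
          (∑ j ∈ Finset.Icc (k + 1) (n + 1),
              g (x j) / ∏ l ∈ (Finset.Icc (k + 1) (n + 1)).erase j, (x j - x l)) := by
  have h := DD_leibniz x f g n 1 (by rw [show 1+n = n+1 by omega]; exact hx)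
  rw [show 1+n = n+1 by omega] at h
  have hIcc : Finset.Icc 0 n = Finset.range (n+1) := by
    ext t; simp [Nat.lt_succ_iff]
  have e : ∑ k ∈ Finset.Icc 1 (n+1), DD x f 1 k * DD x g k (n+1)
      = ∑ k ∈ Finset.range (n+1), DD x f 1 (k+1) * DD x g (k+1) (n+1) := by
    have e1 := sum_shift (fun k => DD x f 1 k * DD x g k (n+1)) 0 n
    norm_num at e1
    rw [e1, hIcc]
  calc ∑ j ∈ Finset.Icc 1 (n + 1),
        f (x j) * g (x j) / ∏ l ∈ (Finset.Icc 1 (n + 1)).erase j, (x j - x l)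
      = DD x (fun y => f y * g y) 1 (n+1) := rfl
    _ = ∑ k ∈ Finset.Icc 1 (n+1), DD x f 1 k * DD x g k (n+1) := h
    _ = ∑ k ∈ Finset.range (n+1), DD x f 1 (k+1) * DD x g (k+1) (n+1) := e
    _ = _ := rfl
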